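/- Under the hypotheses of the discrete Sidon-type theorem (orthonormal system (φ_k) on [0,1] with φ_1 ≡ 1 satisfying conditions (1)–(3) with bound M, and n_1 = 1, m_{k-1} < n_k ≤ m_k), for all real numbers a_2,...,a_N and N ≥ 2: (1/M) Σ_{k=2}^N |a_k| ≤ ‖Σ_{k=2}^N a_k φ_{n_k}‖_∞ ≤ M Σ_{k=2}^N |a_k|. -/

import Mathlib

set_option linter.unusedSectionVars false
set_option linter.unusedVariables false

open Real MeasureTheory Filter

/-- L¹ norm of `f` on `(0,1)`. -/
noncomputable def l1Norm01 (f : ℝ → ℝ) : ℝ := ∫ x in (0:ℝ)..1, |f x|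

/-- Essential supremum of `|f|` on `[0,1]`. -/
noncomputable def essSupNorm01 (f : ℝ → ℝ) : ℝ :=
  essSup (fun x => |f x|) (volume.restrict (Set.Icc (0:ℝ) 1))

/-- The `n`-th Rademacher function. -/
noncomputable def rademacher (n : ℕ) (x : ℝ) : ℝ := Real.sign (Real.sin (2^n * π * x))

/-- midpoint of the i-th interval (1-based) of the uniform partition of [0,1] into mm pieces -/
noncomputable def sidonMid (mm i : ℕ) : ℝ := (2*(i:ℝ) - 1)/(2*(mm:ℝ))

/-- f is a step function w.r.t. the uniform partition into mm pieces -/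
def SidonStep (mm : ℕ) (f : ℝ → ℝ) : Prop :=
  ∀ i : ℕ, 1 ≤ i → i ≤ mm → ∀ x ∈ Set.Ioo (((i:ℝ)-1)/(mm:ℝ)) ((i:ℝ)/(mm:ℝ)), f x = f (sidonMid mm i)

lemma sidonMid_mem {mm i : ℕ} (h1 : 1 ≤ i) (h2 : i ≤ mm) :
    sidonMid mm i ∈ Set.Ioo (((i:ℝ)-1)/(mm:ℝ)) ((i:ℝ)/(mm:ℝ)) := by
  have hm : (0:ℝ) < mm := by
    have : 0 < mm := lt_of_lt_of_le h1 h2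
    exact_mod_cast this
  have hi : (1:ℝ) ≤ (i:ℝ) := by exact_mod_cast h1
  unfold sidonMid
  constructor
  · rw [div_lt_div_iff₀ hm (by linarith : (0:ℝ) < 2*mm)]
    nlinarith
  · rw [div_lt_div_iff₀ (by linarith : (0:ℝ) < 2*mm) hm]
    nlinarith

lemma sidonStep_of_forall {mm : ℕ} {f : ℝ → ℝ}
    (h : ∀ i : ℕ, 1 ≤ i → i ≤ mm → ∀ x ∈ Set.Ioo (((i:ℝ)-1)/(mm:ℝ)) ((i:ℝ)/(mm:ℝ)),
      ∀ y ∈ Set.Ioo (((i:ℝ)-1)/(mm:ℝ)) ((i:ℝ)/(mm:ℝ)), f x = f y) : SidonStep mm f :=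
  fun i h1 h2 x hx => h i h1 h2 x hx _ (sidonMid_mem h1 h2)

lemma SidonStep.mul {mm : ℕ} {f g : ℝ → ℝ} (hf : SidonStep mm f) (hg : SidonStep mm g) :
    SidonStep mm (fun x => f x * g x) := fun i h1 h2 x hx => by
  simp only [hf i h1 h2 x hx, hg i h1 h2 x hx]

lemma SidonStep.const {mm : ℕ} (c : ℝ) : SidonStep mm (fun _ => c) := fun _ _ _ _ _ => rfl

/-- a.e. every point of [0,1] lies in one of the open subintervals -/
lemma sidon_cover {mm : ℕ} (hm : 1 ≤ mm) :
    ∀ᵐ x ∂(volume.restrict (Set.Icc (0:ℝ) 1)),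
      ∃ i : ℕ, 1 ≤ i ∧ i ≤ mm ∧ x ∈ Set.Ioo (((i:ℝ)-1)/(mm:ℝ)) ((i:ℝ)/(mm:ℝ)) := by
  have hmR : (0:ℝ) < mm := by exact_mod_cast hm
  set S : Set ℝ := Set.range (fun j : ℕ => (j:ℝ)/(mm:ℝ)) with hS
  have hSc : S.Countable := Set.countable_range _
  have hS0 : volume S = 0 := hSc.measure_zero _
  have hS0' : (volume.restrict (Set.Icc (0:ℝ) 1)) S = 0 :=
    le_antisymm (le_trans (Measure.restrict_le_self _) hS0.le) (zero_le)
  have hae : ∀ᵐ x ∂(volume.restrict (Set.Icc (0:ℝ) 1)), x ∉ S :=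
    (ae_iff.mpr (by simpa using hS0'))
  have haeI : ∀ᵐ x ∂(volume.restrict (Set.Icc (0:ℝ) 1)), x ∈ Set.Icc (0:ℝ) 1 :=
    ae_restrict_mem measurableSet_Icc
  filter_upwards [hae, haeI] with x hxS hxI
  obtain ⟨hx0, hx1⟩ := hxI
  -- x ≠ j/mm for all j
  have hne : ∀ j : ℕ, x ≠ (j:ℝ)/(mm:ℝ) := by
    intro j hj; exact hxS ⟨j, hj.symm⟩
  have hx0' : 0 < x := lt_of_le_of_ne hx0 (by simpa using (hne 0).symm)
  have hx1' : x < 1 := lt_of_le_of_ne hx1 (by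
    intro h; exact hne mm (by rw [h, div_self (ne_of_gt hmR)]))
  set fl : ℕ := Nat.floor (x * mm) with hfl
  have hxm0 : 0 ≤ x * mm := by positivity
  have hfle : (fl:ℝ) ≤ x * mm := Nat.floor_le hxm0
  have hflt : x * mm < fl + 1 := Nat.lt_floor_add_one _
  have hneq : (fl:ℝ) ≠ x * mm := by
    intro h
    exact hne fl (by field_simp [h.symm]; linarith)
  have hflt' : (fl:ℝ) < x * mm := lt_of_le_of_ne hfle hneq
  have hxmm : x * mm < mm := by nlinarith
  have hflm : fl + 1 ≤ mm := by
    have : (fl:ℝ) < mm := lt_of_lt_of_le hflt' hxmm.le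
    exact_mod_cast Nat.succ_le_of_lt (by exact_mod_cast this)
  refine ⟨fl + 1, Nat.le_add_left 1 fl, hflm, ?_, ?_⟩
  · push_cast
    rw [div_lt_iff₀ hmR]
    push_cast at hflt' ⊢
    linarith
  · push_cast
    rw [lt_div_iff₀ hmR]
    push_cast at hflt
    linarith

/-- if two functions agree on all open subintervals, they agree a.e. on [0,1] -/
lemma sidon_ae_eq {mm : ℕ} (hm : 1 ≤ mm) {f g : ℝ → ℝ}
    (h : ∀ i : ℕ, 1 ≤ i → i ≤ mm → ∀ x ∈ Set.Ioo (((i:ℝ)-1)/(mm:ℝ)) ((i:ℝ)/(mm:ℝ)), f x = g x) :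
    f =ᶠ[ae (volume.restrict (Set.Icc (0:ℝ) 1))] g := by
  filter_upwards [sidon_cover hm] with x hx
  obtain ⟨i, h1, h2, hmem⟩ := hx
  exact h i h1 h2 x hmem

lemma sidon_ae_eq_Ioc {mm : ℕ} (hm : 1 ≤ mm) {f g : ℝ → ℝ}
    (h : ∀ i : ℕ, 1 ≤ i → i ≤ mm → ∀ x ∈ Set.Ioo (((i:ℝ)-1)/(mm:ℝ)) ((i:ℝ)/(mm:ℝ)), f x = g x) :
    f =ᶠ[ae (volume.restrict (Set.Ioc (0:ℝ) 1))] g :=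
  (ae_mono (Measure.restrict_mono Set.Ioc_subset_Icc_self le_rfl)) (sidon_ae_eq hm h)

/-- integral of a function constant on an open interval -/
lemma sidon_piece_integrable {a b c : ℝ} (hab : a ≤ b) {f : ℝ → ℝ}
    (h : ∀ x ∈ Set.Ioo a b, f x = c) :
    IntervalIntegrable f volume a b ∧ ∫ x in a..b, f x = (b - a) * c := by
  have hres : volume.restrict (Set.Ioc a b) = volume.restrict (Set.Ioo a b) :=
    (Measure.restrict_congr_set Ioo_ae_eq_Ioc).symm
  have hae : f =ᶠ[ae (volume.restrict (Set.Ioc a b))] fun _ => c := by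
    rw [hres]
    filter_upwards [ae_restrict_mem measurableSet_Ioo] with x hx using h x hx
  have hint : IntegrableOn f (Set.Ioc a b) volume := by
    unfold IntegrableOn
    exact (integrableOn_const measure_Ioc_lt_top.ne).congr hae.symm
  constructor
  · rw [intervalIntegrable_iff_integrableOn_Ioc_of_le hab]; exact hint
  · rw [intervalIntegral.integral_of_le hab]
    calc ∫ x in Set.Ioc a b, f x = ∫ _x in Set.Ioc a b, c := integral_congr_ae hae
    _ = (b - a) * c := by
      simp [Real.volume_Ioc, ENNReal.toReal_ofReal (sub_nonneg.mpr hab), hab]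

lemma sidon_piece {mm : ℕ} (hm : 1 ≤ mm) {f : ℝ → ℝ} (hf : SidonStep mm f)
    (k : ℕ) (hk : k < mm) :
    IntervalIntegrable f volume ((k:ℝ)/mm) (((k:ℝ)+1)/mm) ∧
      ∫ x in ((k:ℝ)/mm)..(((k:ℝ)+1)/mm), f x = (1/(mm:ℝ)) * f (sidonMid mm (k+1)) := by
  have hmR : (0:ℝ) < mm := by exact_mod_cast hm
  have hle : (k:ℝ)/mm ≤ ((k:ℝ)+1)/mm := by
    gcongr
    linarith
  have hconst : ∀ x ∈ Set.Ioo ((k:ℝ)/mm) (((k:ℝ)+1)/mm), f x = f (sidonMid mm (k+1)) := by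
    intro x hx
    have := hf (k+1) (Nat.le_add_left 1 k) hk
    apply this
    have : (((k+1:ℕ)):ℝ) - 1 = (k:ℝ) := by push_cast; ring
    rw [this]; push_cast; exact hx
  obtain ⟨h1, h2⟩ := sidon_piece_integrable hle hconst
  refine ⟨h1, ?_⟩
  rw [h2]; congr 1; field_simp; ring

lemma sidon_integrable {mm : ℕ} (hm : 1 ≤ mm) {f : ℝ → ℝ} (hf : SidonStep mm f) :
    IntervalIntegrable f volume 0 1 := by
  have hmR : (0:ℝ) < mm := by exact_mod_cast hm
  have h0 : ((0:ℕ):ℝ)/mm = 0 := by simp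
  have h1 : ((mm:ℕ):ℝ)/mm = 1 := div_self (ne_of_gt hmR)
  have := IntervalIntegrable.trans_iterate (a := fun k : ℕ => (k:ℝ)/mm) (n := mm)
    (f := f) (μ := volume) ?_
  · rwa [h0, h1] at this
  · intro k hk
    have := (sidon_piece hm hf k hk).1
    convert this using 2
    push_cast; ring

lemma sidon_integral {mm : ℕ} (hm : 1 ≤ mm) {f : ℝ → ℝ} (hf : SidonStep mm f) :
    ∫ x in (0:ℝ)..1, f x = (1/(mm:ℝ)) * ∑ i ∈ Finset.range mm, f (sidonMid mm (i+1)) := by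
  have hmR : (0:ℝ) < mm := by exact_mod_cast hm
  have h0 : ((0:ℕ):ℝ)/mm = 0 := by simp
  have h1 : ((mm:ℕ):ℝ)/mm = 1 := div_self (ne_of_gt hmR)
  have hsum := intervalIntegral.sum_integral_adjacent_intervals (a := fun k : ℕ => (k:ℝ)/mm)
    (n := mm) (f := f) (μ := volume) ?_
  · rw [h0, h1] at hsum
    rw [← hsum, Finset.mul_sum]
    apply Finset.sum_congr rfl
    intro k hk
    have h2 := (sidon_piece hm hf k (Finset.mem_range.mp hk)).2
    rw [← h2]
    congr 1
    push_cast; ring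
  · intro k hk
    have := (sidon_piece hm hf k hk).1
    convert this using 2
    push_cast; ring

lemma sidon_bound {mm : ℕ} (hm : 1 ≤ mm) {f : ℝ → ℝ} (hf : SidonStep mm f)
    {i : ℕ} (h1 : 1 ≤ i) (h2 : i ≤ mm) (x : ℝ)
    (hx : x ∈ Set.Ioo (((i:ℝ)-1)/(mm:ℝ)) ((i:ℝ)/(mm:ℝ))) :
    |f x| ≤ ∑ j ∈ Finset.range mm, |f (sidonMid mm (j+1))| := by
  rw [hf i h1 h2 x hx]
  have hmem : i - 1 ∈ Finset.range mm := by
    apply Finset.mem_range.mpr; omega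
  have := Finset.single_le_sum (f := fun j => |f (sidonMid mm (j+1))|)
    (fun j _ => abs_nonneg _) hmem
  rwa [show i - 1 + 1 = i by omega] at this

lemma sidon_ae_abs_le {mm : ℕ} (hm : 1 ≤ mm) {f : ℝ → ℝ} (hf : SidonStep mm f) :
    ∀ᵐ x ∂(volume.restrict (Set.Icc (0:ℝ) 1)),
      |f x| ≤ ∑ j ∈ Finset.range mm, |f (sidonMid mm (j+1))| := by
  filter_upwards [sidon_cover hm] with x hx
  obtain ⟨i, h1, h2, hmem⟩ := hx
  exact sidon_bound hm hf h1 h2 x hmem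

lemma sidon_isBounded {mm : ℕ} (hm : 1 ≤ mm) {f : ℝ → ℝ} (hf : SidonStep mm f) :
    IsBoundedUnder (· ≤ ·) (ae (volume.restrict (Set.Icc (0:ℝ) 1))) (fun x => |f x|) :=
  ⟨_, (sidon_ae_abs_le hm hf)⟩

lemma sidon_ae_le_essSup {mm : ℕ} (hm : 1 ≤ mm) {f : ℝ → ℝ} (hf : SidonStep mm f) :
    ∀ᵐ x ∂(volume.restrict (Set.Icc (0:ℝ) 1)), |f x| ≤ essSupNorm01 f :=
  ae_le_essSup (sidon_isBounded hm hf)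

lemma sidon_essSup_le {f : ℝ → ℝ} {c : ℝ}
    (h : ∀ᵐ x ∂(volume.restrict (Set.Icc (0:ℝ) 1)), |f x| ≤ c) : essSupNorm01 f ≤ c := by
  have hne : (ae (volume.restrict (Set.Icc (0:ℝ) 1))).NeBot := by
    rw [ae_neBot]
    intro h0
    have : (volume.restrict (Set.Icc (0:ℝ) 1)) (Set.Icc (0:ℝ) 1) = 0 := by rw [h0]; rfl
    rw [Measure.restrict_apply_self] at this
    simp [Real.volume_Icc] at this
  have hcb : IsCoboundedUnder (· ≤ ·) (ae (volume.restrict (Set.Icc (0:ℝ) 1)))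
      (fun x => |f x|) :=
    isCoboundedUnder_le_of_eventually_le _ (x := 0) (Eventually.of_forall fun x => abs_nonneg _)
  exact limsup_le_of_le hcb h

lemma SidonStep.finprod {mm : ℕ} {ι : Type*} (T : Finset ι) (f : ι → ℝ → ℝ)
    (h : ∀ k ∈ T, SidonStep mm (f k)) : SidonStep mm (fun x => ∏ k ∈ T, f k x) := by
  induction T using Finset.cons_induction with
  | empty => simpa using SidonStep.const 1
  | cons a T ha ih =>
    have : (fun x => ∏ k ∈ Finset.cons a T ha, f k x)
        = fun x => f a x * ∏ k ∈ T, f k x := by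
      funext x; rw [Finset.prod_cons]
    rw [this]
    exact (h a (Finset.mem_cons_self a T)).mul
      (ih fun k hk => h k (Finset.mem_cons_of_mem hk))

lemma SidonStep.finsum {mm : ℕ} {ι : Type*} (T : Finset ι) (f : ι → ℝ → ℝ)
    (h : ∀ k ∈ T, SidonStep mm (f k)) : SidonStep mm (fun x => ∑ k ∈ T, f k x) := by
  intro i h1 h2 x hx
  exact Finset.sum_congr rfl fun k hk => h k hk i h1 h2 x hx

lemma SidonStep.add {mm : ℕ} {f g : ℝ → ℝ} (hf : SidonStep mm f) (hg : SidonStep mm g) :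
    SidonStep mm (fun x => f x + g x) := by
  intro i h1 h2 x hx
  show f x + g x = f (sidonMid mm i) + g (sidonMid mm i)
  rw [hf i h1 h2 x hx, hg i h1 h2 x hx]

/-- any step function is a pointwise (on the open intervals) linear combination of φ 1 .. φ mm -/
lemma sidon_span (m : ℕ → ℕ) (φ : ℕ → ℝ → ℝ)
    (horth : ∀ i j, 1 ≤ i → 1 ≤ j →
      (∫ x in (0:ℝ)..1, φ i x * φ j x) = if i = j then 1 else 0)
    (hstep : ∀ k, 1 ≤ k → ∀ j, 1 ≤ j → j ≤ m k → ∀ i, 1 ≤ i → i ≤ m k →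
      ∀ x ∈ Set.Ioo (((i:ℝ)-1)/(m k)) ((i:ℝ)/(m k)),
        ∀ y ∈ Set.Ioo (((i:ℝ)-1)/(m k)) ((i:ℝ)/(m k)), φ j x = φ j y)
    (k : ℕ) (hk : 1 ≤ k) (hmk : 1 ≤ m k) {g : ℝ → ℝ} (hg : SidonStep (m k) g) :
    ∃ d : Fin (m k) → ℝ, ∀ i : ℕ, 1 ≤ i → i ≤ m k →
      ∀ x ∈ Set.Ioo (((i:ℝ)-1)/(m k)) ((i:ℝ)/(m k)),
        g x = ∑ j : Fin (m k), d j * φ ((j:ℕ)+1) x := by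
  set mm := m k with hmm
  have hmR : (0:ℝ) < mm := by exact_mod_cast hmk
  have hsq : Real.sqrt mm ≠ 0 := ne_of_gt (Real.sqrt_pos.mpr hmR)
  have hφstep : ∀ j : ℕ, 1 ≤ j → j ≤ mm → SidonStep mm (φ j) := by
    intro j h1 h2
    exact sidonStep_of_forall (hstep k hk j h1 h2)
  -- the vectors
  set w : Fin mm → EuclideanSpace ℝ (Fin mm) :=
    fun j => WithLp.toLp 2 (fun i => φ ((j:ℕ)+1) (sidonMid mm ((i:ℕ)+1)) / Real.sqrt mm) with hw
  have hwon : Orthonormal ℝ w := by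
    rw [orthonormal_iff_ite]
    intro j j'
    have hint := horth ((j:ℕ)+1) ((j':ℕ)+1) (Nat.le_add_left 1 _) (Nat.le_add_left 1 _)
    rw [sidon_integral hmk ((hφstep _ (Nat.le_add_left 1 _) j.isLt).mul
      (hφstep _ (Nat.le_add_left 1 _) j'.isLt))] at hint
    have : (inner ℝ (w j) (w j') : ℝ)
        = (1/(mm:ℝ)) * ∑ i ∈ Finset.range mm,
            φ ((j:ℕ)+1) (sidonMid mm (i+1)) * φ ((j':ℕ)+1) (sidonMid mm (i+1)) := by
      rw [PiLp.inner_apply]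
      simp only [RCLike.inner_apply, starRingEnd_apply, star_trivial, hw]
      rw [Finset.mul_sum, ← Fin.sum_univ_eq_sum_range
        (fun i => (1/(mm:ℝ)) * (φ ((j:ℕ)+1) (sidonMid mm (i+1)) * φ ((j':ℕ)+1) (sidonMid mm (i+1))))]
      apply Finset.sum_congr rfl
      intro i _
      rw [div_mul_div_comm, Real.mul_self_sqrt hmR.le]
      field_simp
    rw [this, hint]
    simp only [Fin.val_eq_val] at *
    by_cases h : j = j'
    · simp [h]
    · have : ¬ ((j:ℕ)+1 = (j':ℕ)+1) := by
        simp only [add_left_inj]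
        exact fun hc => h (Fin.ext hc)
      simp [h, this]; omega
  have : Nonempty (Fin mm) := ⟨⟨0, hmk⟩⟩
  have hspan : Submodule.span ℝ (Set.range w) = ⊤ :=
    hwon.linearIndependent.span_eq_top_of_card_eq_finrank
      (by simp [finrank_euclideanSpace_fin])
  set c : EuclideanSpace ℝ (Fin mm) := WithLp.toLp 2 (fun i => g (sidonMid mm ((i:ℕ)+1))) with hc
  have hcmem : c ∈ Submodule.span ℝ (Set.range w) := by rw [hspan]; trivial
  rw [Submodule.mem_span_range_iff_exists_fun] at hcmem
  obtain ⟨e, he⟩ := hcmem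
  refine ⟨fun j => e j / Real.sqrt mm, ?_⟩
  intro i h1 h2 x hx
  have hilt : i - 1 < mm := by omega
  have hval : ((⟨i-1, hilt⟩ : Fin mm) : ℕ) + 1 = i := by
    show i - 1 + 1 = i
    omega
  have hgx : g x = c ⟨i-1, hilt⟩ := by
    rw [hg i h1 h2 x hx, hc]
    simp only [PiLp.toLp_apply]
    rw [hval]
  have hφx : ∀ j : Fin mm, φ ((j:ℕ)+1) x = φ ((j:ℕ)+1) (sidonMid mm i) :=
    fun j => hφstep _ (Nat.le_add_left 1 _) j.isLt i h1 h2 x hx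
  have hce : ∑ j, e j * w j ⟨i-1, hilt⟩ = c ⟨i-1, hilt⟩ := by
    have h0 : (∑ j, e j • w j) ⟨i-1, hilt⟩ = c ⟨i-1, hilt⟩ := by rw [he]
    rw [← h0]
    simp [WithLp.ofLp_sum, Finset.sum_apply, PiLp.smul_apply]
  rw [hgx, ← hce]
  apply Finset.sum_congr rfl
  intro j _
  rw [hφx j, hw]
  simp only [PiLp.toLp_apply]
  rw [hval]
  field_simp

lemma sidon_m_mono (m : ℕ → ℕ) (hmono : ∀ k, 1 ≤ k → m k < m (k+1)) :
    ∀ j k, 1 ≤ j → j ≤ k → m j ≤ m k := by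
  intro j k h1 h2
  induction k with
  | zero => omega
  | succ n ih =>
    by_cases hjn : j = n + 1
    · subst hjn; exact le_rfl
    · have hle : j ≤ n := by omega
      exact le_trans (ih hle) (le_of_lt (hmono n (le_trans h1 hle)))

lemma sidon_m_ge (m : ℕ → ℕ) (hm1 : m 1 = 1) (hmono : ∀ k, 1 ≤ k → m k < m (k+1)) :
    ∀ k, 1 ≤ k → k ≤ m k := by
  intro k hk
  induction k with
  | zero => omega
  | succ n ih =>
    rcases Nat.eq_zero_or_pos n with h0 | h0
    · subst h0; simpa using hm1.ge
    · have h1 := ih h0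
      have h2 := hmono n h0
      omega

section
variable (m : ℕ → ℕ) (φ : ℕ → ℝ → ℝ)
variable (hm1 : m 1 = 1) (hmono : ∀ k, 1 ≤ k → m k < m (k+1))
variable (hφ1 : ∀ x, φ 1 x = 1)
variable (horth : ∀ i j, 1 ≤ i → 1 ≤ j →
      (∫ x in (0:ℝ)..1, φ i x * φ j x) = if i = j then 1 else 0)
variable (hstep : ∀ k, 1 ≤ k → ∀ j, 1 ≤ j → j ≤ m k → ∀ i, 1 ≤ i → i ≤ m k →
      ∀ x ∈ Set.Ioo (((i:ℝ)-1)/(m k)) ((i:ℝ)/(m k)),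
        ∀ y ∈ Set.Ioo (((i:ℝ)-1)/(m k)) ((i:ℝ)/(m k)), φ j x = φ j y)
variable (horth2 : ∀ k, 2 ≤ k → ∀ n, m k < n → ∀ j, 2 ≤ j → j ≤ m k →
      (∫ x in (0:ℝ)..1, (φ n x)^2 * φ j x) = 0)
variable (nseq : ℕ → ℕ)
variable (hnk : ∀ k, 2 ≤ k → m (k-1) < nseq k ∧ nseq k ≤ m k)

include hm1 hmono hstep in
lemma sidon_phi_step {j K : ℕ} (hK : 1 ≤ K) (h1 : 1 ≤ j) (h2 : j ≤ m K) :
    SidonStep (m K) (φ j) := sidonStep_of_forall (hstep K hK j h1 h2)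

include hm1 hmono horth hstep in
lemma sidon_orth {k n : ℕ} (hk : 1 ≤ k) (hn : m k < n) {g : ℝ → ℝ}
    (hg : SidonStep (m k) g) : ∫ x in (0:ℝ)..1, φ n x * g x = 0 := by
  have hmk : 1 ≤ m k := hm1 ▸ sidon_m_mono m hmono 1 k le_rfl hk
  have hn1 : 1 ≤ n := le_trans hmk (le_of_lt hn) |>.trans le_rfl
  set K := max k n with hK
  have hK1 : 1 ≤ K := le_trans hk (le_max_left _ _)
  have hmkK : m k ≤ m K := sidon_m_mono m hmono k K hk (le_max_left _ _)
  have hnK : n ≤ m K := le_trans (le_max_right k n)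
    (sidon_m_ge m hm1 hmono K hK1)
  have hφn : SidonStep (m K) (φ n) := sidon_phi_step m φ hm1 hmono hstep hK1 hn1 hnK
  obtain ⟨d, hd⟩ := sidon_span m φ horth hstep k hk hmk hg
  -- replace g with the combination
  have hcong : (fun x => φ n x * g x)
      =ᶠ[ae (volume.restrict (Set.Ioc (0:ℝ) 1))]
      (fun x => ∑ j : Fin (m k), d j * (φ n x * φ ((j:ℕ)+1) x)) := by
    apply sidon_ae_eq_Ioc hmk
    intro i h1 h2 x hx
    rw [hd i h1 h2 x hx, Finset.mul_sum]
    apply Finset.sum_congr rfl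
    intro j _
    ring
  have heq : ∫ x in (0:ℝ)..1, φ n x * g x
      = ∫ x in (0:ℝ)..1, ∑ j : Fin (m k), d j * (φ n x * φ ((j:ℕ)+1) x) := by
    rw [intervalIntegral.integral_of_le (by norm_num : (0:ℝ) ≤ 1),
        intervalIntegral.integral_of_le (by norm_num : (0:ℝ) ≤ 1)]
    exact integral_congr_ae hcong
  have hKK : 1 ≤ m K := le_trans hmk hmkK
  have hInt : ∀ j ∈ (Finset.univ : Finset (Fin (m k))),
      IntervalIntegrable (fun x => d j * (φ n x * φ ((j:ℕ)+1) x)) volume 0 1 := by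
    intro j _
    have hjmk : (j:ℕ)+1 ≤ m k := j.isLt
    have hφj : SidonStep (m K) (φ ((j:ℕ)+1)) :=
      sidon_phi_step m φ hm1 hmono hstep hK1 (Nat.le_add_left 1 _) (le_trans hjmk hmkK)
    exact sidon_integrable hKK ((SidonStep.const (d j)).mul (hφn.mul hφj))
  rw [heq, intervalIntegral.integral_finset_sum hInt]
  apply Finset.sum_eq_zero
  intro j _
  have hjmk : (j:ℕ)+1 ≤ m k := j.isLt
  rw [intervalIntegral.integral_const_mul]
  rw [horth n ((j:ℕ)+1) hn1 (Nat.le_add_left 1 _)]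
  have : n ≠ (j:ℕ)+1 := by omega
  simp [this]

include hm1 hmono hφ1 horth hstep horth2 in
lemma sidon_orth2 {k n : ℕ} (hk : 1 ≤ k) (hn : m k < n) {g : ℝ → ℝ}
    (hg : SidonStep (m k) g) :
    ∫ x in (0:ℝ)..1, (φ n x)^2 * g x = ∫ x in (0:ℝ)..1, g x := by
  have hmk : 1 ≤ m k := hm1 ▸ sidon_m_mono m hmono 1 k le_rfl hk
  have hn1 : 1 ≤ n := le_trans hmk (le_of_lt hn)
  set K := max k n with hK
  have hK1 : 1 ≤ K := le_trans hk (le_max_left _ _)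
  have hmkK : m k ≤ m K := sidon_m_mono m hmono k K hk (le_max_left _ _)
  have hnK : n ≤ m K := le_trans (le_max_right k n) (sidon_m_ge m hm1 hmono K hK1)
  have hKK : 1 ≤ m K := le_trans hmk hmkK
  have hφn : SidonStep (m K) (φ n) := sidon_phi_step m φ hm1 hmono hstep hK1 hn1 hnK
  have hφnsq : SidonStep (m K) (fun x => (φ n x)^2) := by
    have := hφn.mul hφn
    convert this using 2 with x
    exact sq (φ n x) ▸ (sq (φ n x)).symm ▸ rfl
  obtain ⟨d, hd⟩ := sidon_span m φ horth hstep k hk hmk hg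
  have hφjK : ∀ j : Fin (m k), SidonStep (m K) (φ ((j:ℕ)+1)) := fun j =>
    sidon_phi_step m φ hm1 hmono hstep hK1 (Nat.le_add_left 1 _)
      (le_trans j.isLt hmkK)
  -- first: ∫ g = d 0
  have hg_int : ∫ x in (0:ℝ)..1, g x = ∑ j : Fin (m k), d j * ∫ x in (0:ℝ)..1, φ ((j:ℕ)+1) x := by
    have hcong : g =ᶠ[ae (volume.restrict (Set.Ioc (0:ℝ) 1))]
        (fun x => ∑ j : Fin (m k), d j * φ ((j:ℕ)+1) x) :=
      sidon_ae_eq_Ioc hmk (fun i h1 h2 x hx => hd i h1 h2 x hx)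
    rw [intervalIntegral.integral_of_le (by norm_num : (0:ℝ) ≤ 1)]
    rw [integral_congr_ae hcong]
    rw [← intervalIntegral.integral_of_le (by norm_num : (0:ℝ) ≤ 1)]
    rw [intervalIntegral.integral_finset_sum (fun j _ =>
      sidon_integrable hKK ((SidonStep.const (d j)).mul (hφjK j)))]
    apply Finset.sum_congr rfl
    intro j _
    exact intervalIntegral.integral_const_mul _ _
  have hphi_int : ∀ j : Fin (m k),
      ∫ x in (0:ℝ)..1, φ ((j:ℕ)+1) x = if (j:ℕ)+1 = 1 then 1 else 0 := by
    intro j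
    have := horth ((j:ℕ)+1) 1 (Nat.le_add_left 1 _) le_rfl
    simp only [hφ1, mul_one] at this
    rw [this]
  -- second: ∫ φn² g = same sum
  have hmain : ∫ x in (0:ℝ)..1, (φ n x)^2 * g x
      = ∑ j : Fin (m k), d j * ∫ x in (0:ℝ)..1, (φ n x)^2 * φ ((j:ℕ)+1) x := by
    have hcong : (fun x => (φ n x)^2 * g x) =ᶠ[ae (volume.restrict (Set.Ioc (0:ℝ) 1))]
        (fun x => ∑ j : Fin (m k), d j * ((φ n x)^2 * φ ((j:ℕ)+1) x)) := by
      apply sidon_ae_eq_Ioc hmk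
      intro i h1 h2 x hx
      rw [hd i h1 h2 x hx, Finset.mul_sum]
      exact Finset.sum_congr rfl (fun j _ => by ring)
    rw [intervalIntegral.integral_of_le (by norm_num : (0:ℝ) ≤ 1),
      integral_congr_ae hcong,
      ← intervalIntegral.integral_of_le (by norm_num : (0:ℝ) ≤ 1)]
    rw [intervalIntegral.integral_finset_sum (fun j _ =>
      sidon_integrable hKK ((SidonStep.const (d j)).mul (hφnsq.mul (hφjK j))))]
    exact Finset.sum_congr rfl (fun j _ => intervalIntegral.integral_const_mul _ _)
  have hsq_int : ∀ j : Fin (m k),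
      ∫ x in (0:ℝ)..1, (φ n x)^2 * φ ((j:ℕ)+1) x = if (j:ℕ)+1 = 1 then 1 else 0 := by
    intro j
    by_cases hj : (j:ℕ)+1 = 1
    · have : (fun x => (φ n x)^2 * φ ((j:ℕ)+1) x) = fun x => φ n x * φ n x := by
        funext x
        rw [hj, hφ1, mul_one, sq]
      rw [this, horth n n hn1 hn1]
      simp [hj]
    · have hj2 : 2 ≤ (j:ℕ)+1 := by omega
      have hk2 : 2 ≤ k := by
        by_contra hc
        have hk1 : k = 1 := by omega
        have hjlt : (j:ℕ) < m k := j.isLt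
        have : m k = 1 := by rw [hk1, hm1]
        omega
      rw [horth2 k hk2 n hn ((j:ℕ)+1) hj2 j.isLt]
      simp [hj]; omega
  rw [hmain, hg_int]
  apply Finset.sum_congr rfl
  intro j _
  rw [hphi_int j, hsq_int j]

include hmono hnk in
lemma sidon_nseq_le {k r : ℕ} (h2 : 2 ≤ k) (hkr : k ≤ r) : nseq k ≤ m r :=
  le_trans (hnk k h2).2 (sidon_m_mono m hmono k r (by omega) hkr)

include hnk in
lemma sidon_nseq_pos {k : ℕ} (h2 : 2 ≤ k) : 1 ≤ nseq k :=
  Nat.one_le_iff_ne_zero.mpr (by have := (hnk k h2).1; omega)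

include hm1 hmono hnk hstep in
lemma sidon_prodstep {r : ℕ} (hr : 2 ≤ r) (S : Finset ℕ)
    (hS2 : ∀ k ∈ S, 2 ≤ k) (hSr : ∀ k ∈ S, k < r) :
    SidonStep (m (r-1)) (fun x => ∏ k ∈ S, φ (nseq k) x) := by
  apply SidonStep.finprod
  intro k hk
  have h2 := hS2 k hk
  have hlt := hSr k hk
  exact sidon_phi_step m φ hm1 hmono hstep (j := nseq k) (K := r - 1) (by omega)
    (sidon_nseq_pos m nseq hnk h2)
    (sidon_nseq_le m hmono nseq hnk h2 (by omega))

include hm1 hmono hφ1 horth hstep hnk in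
lemma sidon_G (S : Finset ℕ) (hne : S.Nonempty) (hS2 : ∀ k ∈ S, 2 ≤ k) :
    ∫ x in (0:ℝ)..1, ∏ k ∈ S, φ (nseq k) x = 0 := by
  set r := S.max' hne with hr
  have hrS : r ∈ S := S.max'_mem hne
  have hr2 : 2 ≤ r := hS2 r hrS
  have hg : SidonStep (m (r-1)) (fun x => ∏ k ∈ S.erase r, φ (nseq k) x) := by
    apply sidon_prodstep m φ hm1 hmono hstep nseq hnk hr2
    · exact fun k hk => hS2 k (Finset.mem_of_mem_erase hk)
    · intro k hk
      have hle := S.le_max' k (Finset.mem_of_mem_erase hk)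
      have hne' := Finset.ne_of_mem_erase hk
      omega
  have heq : (fun x => ∏ k ∈ S, φ (nseq k) x)
      = fun x => φ (nseq r) x * ∏ k ∈ S.erase r, φ (nseq k) x := by
    funext x
    exact (Finset.mul_prod_erase S (fun k => φ (nseq k) x) hrS).symm
  rw [show (∫ x in (0:ℝ)..1, ∏ k ∈ S, φ (nseq k) x)
      = ∫ x in (0:ℝ)..1, φ (nseq r) x * ∏ k ∈ S.erase r, φ (nseq k) x by
    rw [heq]]
  exact sidon_orth m φ hm1 hmono horth hstep (by omega) (by have := (hnk r hr2).1; omega) hg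

include hm1 hmono hφ1 horth hstep horth2 hnk in
lemma sidon_Q (j : ℕ) (hj : 2 ≤ j) (S : Finset ℕ) (hS2 : ∀ k ∈ S, 2 ≤ k) :
    ∫ x in (0:ℝ)..1, φ (nseq j) x * ∏ k ∈ S, φ (nseq k) x
      = if S = {j} then 1 else 0 := by
  by_cases hjS : j ∈ S
  · set r := S.max' ⟨j, hjS⟩ with hr
    have hrS : r ∈ S := S.max'_mem _
    have hr2 : 2 ≤ r := hS2 r hrS
    have hjr : j ≤ r := S.le_max' j hjS
    by_cases hrj : r = j
    · -- max is j
      have heq : (fun x => φ (nseq j) x * ∏ k ∈ S, φ (nseq k) x)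
          = fun x => (φ (nseq j) x)^2 * ∏ k ∈ S.erase j, φ (nseq k) x := by
        funext x
        rw [← Finset.mul_prod_erase S (fun k => φ (nseq k) x) hjS]
        ring
      have hg : SidonStep (m (j-1)) (fun x => ∏ k ∈ S.erase j, φ (nseq k) x) := by
        apply sidon_prodstep m φ hm1 hmono hstep nseq hnk hj
        · exact fun k hk => hS2 k (Finset.mem_of_mem_erase hk)
        · intro k hk
          have hle := S.le_max' k (Finset.mem_of_mem_erase hk)
          have hne' := Finset.ne_of_mem_erase hk
          omega
      rw [show (∫ x in (0:ℝ)..1, φ (nseq j) x * ∏ k ∈ S, φ (nseq k) x)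
          = ∫ x in (0:ℝ)..1, (φ (nseq j) x)^2 * ∏ k ∈ S.erase j, φ (nseq k) x by
        rw [heq]]
      rw [sidon_orth2 m φ hm1 hmono hφ1 horth hstep horth2 (k := j-1) (by omega) (by have := (hnk j hj).1; omega) hg]
      by_cases hSe : S.erase j = ∅
      · have hSj : S = {j} := by
          apply Finset.eq_singleton_iff_unique_mem.mpr
          refine ⟨hjS, fun y hy => ?_⟩
          by_contra hy'
          exact (Finset.eq_empty_iff_forall_notMem.mp hSe y)
            (Finset.mem_erase.mpr ⟨hy', hy⟩)
        rw [if_pos hSj, hSe]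
        simp
      · have hne2 : (S.erase j).Nonempty := Finset.nonempty_iff_ne_empty.mpr hSe
        rw [sidon_G m φ hm1 hmono hφ1 horth hstep nseq hnk _ hne2
          (fun k hk => hS2 k (Finset.mem_of_mem_erase hk))]
        have : S ≠ {j} := by
          obtain ⟨y, hy⟩ := hne2
          intro hc
          rw [hc] at hy
          simp at hy
        simp [this]
    · -- max r > j
      have hjr' : j < r := by omega
      have heq : (fun x => φ (nseq j) x * ∏ k ∈ S, φ (nseq k) x)
          = fun x => φ (nseq r) x * (φ (nseq j) x * ∏ k ∈ S.erase r, φ (nseq k) x) := by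
        funext x
        rw [← Finset.mul_prod_erase S (fun k => φ (nseq k) x) hrS]
        ring
      have hg : SidonStep (m (r-1))
          (fun x => φ (nseq j) x * ∏ k ∈ S.erase r, φ (nseq k) x) := by
        have h1 : SidonStep (m (r-1)) (φ (nseq j)) :=
          sidon_phi_step m φ hm1 hmono hstep (by omega) (sidon_nseq_pos m nseq hnk hj)
            (sidon_nseq_le m hmono nseq hnk hj (by omega))
        have h2 : SidonStep (m (r-1)) (fun x => ∏ k ∈ S.erase r, φ (nseq k) x) := by
          apply sidon_prodstep m φ hm1 hmono hstep nseq hnk hr2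
          · exact fun k hk => hS2 k (Finset.mem_of_mem_erase hk)
          · intro k hk
            have hle := S.le_max' k (Finset.mem_of_mem_erase hk)
            have hne' := Finset.ne_of_mem_erase hk
            omega
        exact h1.mul h2
      rw [show (∫ x in (0:ℝ)..1, φ (nseq j) x * ∏ k ∈ S, φ (nseq k) x)
          = ∫ x in (0:ℝ)..1, φ (nseq r) x
              * (φ (nseq j) x * ∏ k ∈ S.erase r, φ (nseq k) x) by rw [heq]]
      rw [sidon_orth m φ hm1 hmono horth hstep (k := r-1) (by omega) (by have := (hnk r hr2).1; omega) hg]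
      have : S ≠ {j} := by
        intro hc
        rw [hc] at hrS
        simp at hrS
        exact hrj hrS
      simp [this]
  · -- j ∉ S
    have heq : (fun x => φ (nseq j) x * ∏ k ∈ S, φ (nseq k) x)
        = fun x => ∏ k ∈ insert j S, φ (nseq k) x := by
      funext x
      rw [Finset.prod_insert hjS]
    rw [show (∫ x in (0:ℝ)..1, φ (nseq j) x * ∏ k ∈ S, φ (nseq k) x)
        = ∫ x in (0:ℝ)..1, ∏ k ∈ insert j S, φ (nseq k) x by rw [heq]]
    rw [sidon_G m φ hm1 hmono hφ1 horth hstep nseq hnk _ (Finset.insert_nonempty _ _)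
      (by
        intro k hk
        rcases Finset.mem_insert.mp hk with h | h
        · omega
        · exact hS2 k h)]
    have : S ≠ {j} := fun hc => hjS (by rw [hc]; exact Finset.mem_singleton_self j)
    simp [this]
end

lemma sidon_sign_mul (x : ℝ) : x * Real.sign x = |x| := by
  rcases lt_trichotomy x 0 with h | h | h
  · rw [Real.sign_of_neg h, abs_of_neg h]; ring
  · simp [h]
  · rw [Real.sign_of_pos h, abs_of_pos h]; ring

lemma sidon_abs_sign (x : ℝ) : |Real.sign x| ≤ 1 := by
  rcases lt_trichotomy x 0 with h | h | h
  · rw [Real.sign_of_neg h]; norm_num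
  · simp [h]
  · rw [Real.sign_of_pos h]; norm_num

/-- Two-sided Sidon-type inequality for discrete orthonormal systems. -/
theorem discrete_sidon_two_sided (m : ℕ → ℕ) (hm1 : m 1 = 1)
    (hmono : ∀ k, 1 ≤ k → m k < m (k+1))
    (φ : ℕ → ℝ → ℝ) (hφ1 : ∀ x, φ 1 x = 1)
    (horth : ∀ i j, 1 ≤ i → 1 ≤ j →
      (∫ x in (0:ℝ)..1, φ i x * φ j x) = if i = j then 1 else 0)
    (hstep : ∀ k, 1 ≤ k → ∀ j, 1 ≤ j → j ≤ m k → ∀ i, 1 ≤ i → i ≤ m k →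
      ∀ x ∈ Set.Ioo (((i:ℝ)-1)/(m k)) ((i:ℝ)/(m k)),
        ∀ y ∈ Set.Ioo (((i:ℝ)-1)/(m k)) ((i:ℝ)/(m k)), φ j x = φ j y)
    (horth2 : ∀ k, 2 ≤ k → ∀ n, m k < n → ∀ j, 2 ≤ j → j ≤ m k →
      (∫ x in (0:ℝ)..1, (φ n x)^2 * φ j x) = 0)
    (M : ℝ) (hM : 0 < M) (hbound : ∀ n, 1 ≤ n → essSupNorm01 (φ n) ≤ M)
    (nseq : ℕ → ℕ) (hn1 : nseq 1 = 1)
    (hnk : ∀ k, 2 ≤ k → m (k-1) < nseq k ∧ nseq k ≤ m k)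
    (N : ℕ) (hN : 2 ≤ N) (a : ℕ → ℝ) :
    (1/M) * ∑ k ∈ Finset.Icc 2 N, |a k| ≤
        essSupNorm01 (fun x => ∑ k ∈ Finset.Icc 2 N, a k * φ (nseq k) x) ∧
      essSupNorm01 (fun x => ∑ k ∈ Finset.Icc 2 N, a k * φ (nseq k) x) ≤
        M * ∑ k ∈ Finset.Icc 2 N, |a k| := by
  have hN1 : 1 ≤ N := by omega
  set mm := m N with hmmdef
  have hmm : 1 ≤ mm := by
    have := sidon_m_mono m hmono 1 N le_rfl hN1
    omega
  have hn1' : ∀ k ∈ Finset.Icc 2 N, 1 ≤ nseq k := by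
    intro k hk
    obtain ⟨h2, _⟩ := Finset.mem_Icc.mp hk
    have := (hnk k h2).1; omega
  have hnle : ∀ k ∈ Finset.Icc 2 N, nseq k ≤ mm := by
    intro k hk
    obtain ⟨h2, hkN⟩ := Finset.mem_Icc.mp hk
    exact le_trans (hnk k h2).2 (sidon_m_mono m hmono k N (by omega) hkN)
  have hφs : ∀ k ∈ Finset.Icc 2 N, SidonStep mm (φ (nseq k)) := fun k hk =>
    sidon_phi_step m φ hm1 hmono hstep hN1 (hn1' k hk) (hnle k hk)
  set f := fun x => ∑ k ∈ Finset.Icc 2 N, a k * φ (nseq k) x with hfdef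
  have hfstep : SidonStep mm f :=
    SidonStep.finsum _ _ (fun k hk => (SidonStep.const (a k)).mul (hφs k hk))
  have haeφ : ∀ᵐ x ∂(volume.restrict (Set.Icc (0:ℝ) 1)),
      ∀ k ∈ Finset.Icc 2 N, |φ (nseq k) x| ≤ M := by
    rw [Filter.eventually_all_finset]
    intro k hk
    filter_upwards [sidon_ae_le_essSup hmm (hφs k hk)] with x hx
    exact le_trans hx (hbound (nseq k) (hn1' k hk))
  have hupper : essSupNorm01 f ≤ M * ∑ k ∈ Finset.Icc 2 N, |a k| := by
    apply sidon_essSup_le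
    filter_upwards [haeφ] with x hx
    calc |f x| ≤ ∑ k ∈ Finset.Icc 2 N, |a k * φ (nseq k) x| :=
          Finset.abs_sum_le_sum_abs _ _
    _ ≤ ∑ k ∈ Finset.Icc 2 N, |a k| * M := by
        apply Finset.sum_le_sum
        intro k hk
        rw [abs_mul]
        exact mul_le_mul_of_nonneg_left (hx k hk) (abs_nonneg _)
    _ = M * ∑ k ∈ Finset.Icc 2 N, |a k| := by rw [← Finset.sum_mul]; ring
  -- Riesz product
  set ψ := fun x => ∏ k ∈ Finset.Icc 2 N, (Real.sign (a k) * φ (nseq k) x / M + 1)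
    with hψdef
  have hψstep : SidonStep mm ψ := by
    apply SidonStep.finprod
    intro k hk i h1 h2 x hx
    show Real.sign (a k) * φ (nseq k) x / M + 1 = _
    rw [hφs k hk i h1 h2 x hx]
  have hψpos : ∀ᵐ x ∂(volume.restrict (Set.Icc (0:ℝ) 1)), 0 ≤ ψ x := by
    filter_upwards [haeφ] with x hx
    apply Finset.prod_nonneg
    intro k hk
    have habs : |Real.sign (a k) * φ (nseq k) x / M| ≤ 1 := by
      rw [abs_div, abs_mul, abs_of_pos hM, div_le_one hM]
      calc |Real.sign (a k)| * |φ (nseq k) x| ≤ 1 * M :=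
            mul_le_mul (sidon_abs_sign _) (hx k hk) (abs_nonneg _) zero_le_one
      _ = M := one_mul M
    have := (abs_le.mp habs).1
    linarith
  -- expansion of the product
  have hexp : ∀ x, ψ x = ∑ S ∈ (Finset.Icc 2 N).powerset,
      (∏ k ∈ S, (Real.sign (a k) / M)) * ∏ k ∈ S, φ (nseq k) x := by
    intro x
    show ∏ k ∈ Finset.Icc 2 N, (Real.sign (a k) * φ (nseq k) x / M + 1) = _
    rw [Finset.prod_add]
    apply Finset.sum_congr rfl
    intro S hS
    rw [Finset.prod_const_one, mul_one, ← Finset.prod_mul_distrib]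
    apply Finset.prod_congr rfl
    intro k hk
    ring
  have hprodstep : ∀ S ∈ (Finset.Icc 2 N).powerset,
      SidonStep mm (fun x => ∏ k ∈ S, φ (nseq k) x) := by
    intro S hS
    exact SidonStep.finprod _ _ (fun k hk => hφs k (Finset.mem_powerset.mp hS hk))
  have hS2 : ∀ S ∈ (Finset.Icc 2 N).powerset, ∀ k ∈ S, 2 ≤ k := by
    intro S hS k hk
    exact (Finset.mem_Icc.mp (Finset.mem_powerset.mp hS hk)).1
  have hψ1 : ∫ x in (0:ℝ)..1, ψ x = 1 := by
    have h1 : ∫ x in (0:ℝ)..1, ψ x = ∑ S ∈ (Finset.Icc 2 N).powerset,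
        (∏ k ∈ S, (Real.sign (a k) / M)) * ∫ x in (0:ℝ)..1, ∏ k ∈ S, φ (nseq k) x := by
      calc ∫ x in (0:ℝ)..1, ψ x
          = ∫ x in (0:ℝ)..1, ∑ S ∈ (Finset.Icc 2 N).powerset,
            (∏ k ∈ S, (Real.sign (a k) / M)) * ∏ k ∈ S, φ (nseq k) x := by
            apply intervalIntegral.integral_congr
            intro x _
            exact hexp x
      _ = ∑ S ∈ (Finset.Icc 2 N).powerset,
            ∫ x in (0:ℝ)..1, (∏ k ∈ S, (Real.sign (a k) / M)) * ∏ k ∈ S, φ (nseq k) x := by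
            apply intervalIntegral.integral_finset_sum
            intro S hS
            exact sidon_integrable hmm ((SidonStep.const _).mul (hprodstep S hS))
      _ = _ := by
            apply Finset.sum_congr rfl
            intro S hS
            exact intervalIntegral.integral_const_mul _ _
    rw [h1, Finset.sum_eq_single ∅]
    · simp
    · intro S hS hSne
      rw [sidon_G m φ hm1 hmono hφ1 horth hstep nseq hnk S
        (Finset.nonempty_iff_ne_empty.mpr hSne) (hS2 S hS), mul_zero]
    · intro h
      exact absurd (Finset.empty_mem_powerset _) h
  have hψφ : ∀ j ∈ Finset.Icc 2 N,
      ∫ x in (0:ℝ)..1, φ (nseq j) x * ψ x = Real.sign (a j) / M := by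
    intro j hj
    obtain ⟨hj2, hjN⟩ := Finset.mem_Icc.mp hj
    have h1 : ∫ x in (0:ℝ)..1, φ (nseq j) x * ψ x
        = ∑ S ∈ (Finset.Icc 2 N).powerset,
          (∏ k ∈ S, (Real.sign (a k) / M))
            * ∫ x in (0:ℝ)..1, φ (nseq j) x * ∏ k ∈ S, φ (nseq k) x := by
      calc ∫ x in (0:ℝ)..1, φ (nseq j) x * ψ x
          = ∫ x in (0:ℝ)..1, ∑ S ∈ (Finset.Icc 2 N).powerset,
            (∏ k ∈ S, (Real.sign (a k) / M))
              * (φ (nseq j) x * ∏ k ∈ S, φ (nseq k) x) := by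
            apply intervalIntegral.integral_congr
            intro x _
            show φ (nseq j) x * ψ x = _
            rw [hexp x, Finset.mul_sum]
            exact Finset.sum_congr rfl (fun S hS => by ring)
      _ = ∑ S ∈ (Finset.Icc 2 N).powerset,
            ∫ x in (0:ℝ)..1, (∏ k ∈ S, (Real.sign (a k) / M))
              * (φ (nseq j) x * ∏ k ∈ S, φ (nseq k) x) := by
            apply intervalIntegral.integral_finset_sum
            intro S hS
            have hφj : SidonStep mm (φ (nseq j)) := hφs j hj
            exact sidon_integrable hmm
              ((SidonStep.const _).mul (hφj.mul (hprodstep S hS)))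
      _ = _ := by
            apply Finset.sum_congr rfl
            intro S hS
            exact intervalIntegral.integral_const_mul _ _
    rw [h1]
    have h2 : ∀ S ∈ (Finset.Icc 2 N).powerset,
        (∏ k ∈ S, (Real.sign (a k) / M))
          * ∫ x in (0:ℝ)..1, φ (nseq j) x * ∏ k ∈ S, φ (nseq k) x
        = (∏ k ∈ S, (Real.sign (a k) / M)) * (if S = {j} then 1 else 0) := by
      intro S hS
      rw [sidon_Q m φ hm1 hmono hφ1 horth hstep horth2 nseq hnk j hj2 S (hS2 S hS)]
    rw [Finset.sum_congr rfl h2, Finset.sum_eq_single {j}]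
    · simp
    · intro S hS hSne
      simp [hSne]
    · intro h
      exact absurd (Finset.mem_powerset.mpr (Finset.singleton_subset_iff.mpr hj)) h
  have hfψ : ∫ x in (0:ℝ)..1, f x * ψ x = (1/M) * ∑ k ∈ Finset.Icc 2 N, |a k| := by
    have h1 : ∫ x in (0:ℝ)..1, f x * ψ x
        = ∑ k ∈ Finset.Icc 2 N, a k * ∫ x in (0:ℝ)..1, φ (nseq k) x * ψ x := by
      calc ∫ x in (0:ℝ)..1, f x * ψ x
          = ∫ x in (0:ℝ)..1, ∑ k ∈ Finset.Icc 2 N, a k * (φ (nseq k) x * ψ x) := by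
            apply intervalIntegral.integral_congr
            intro x _
            show f x * ψ x = _
            rw [hfdef]
            simp only []
            rw [Finset.sum_mul]
            exact Finset.sum_congr rfl (fun k hk => by ring)
      _ = ∑ k ∈ Finset.Icc 2 N, ∫ x in (0:ℝ)..1, a k * (φ (nseq k) x * ψ x) := by
            apply intervalIntegral.integral_finset_sum
            intro k hk
            exact sidon_integrable hmm
              ((SidonStep.const _).mul ((hφs k hk).mul hψstep))
      _ = _ := by
            apply Finset.sum_congr rfl
            intro k hk
            exact intervalIntegral.integral_const_mul _ _
    rw [h1]
    rw [Finset.mul_sum]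
    apply Finset.sum_congr rfl
    intro k hk
    rw [hψφ k hk]
    rw [show a k * (Real.sign (a k) / M) = (a k * Real.sign (a k)) / M by ring]
    rw [sidon_sign_mul]
    ring
  have hfψint : IntervalIntegrable (fun x => f x * ψ x) volume 0 1 :=
    sidon_integrable hmm (hfstep.mul hψstep)
  have hEψint : IntervalIntegrable (fun x => essSupNorm01 f * ψ x) volume 0 1 :=
    sidon_integrable hmm ((SidonStep.const _).mul hψstep)
  have hlow : ∫ x in (0:ℝ)..1, f x * ψ x ≤ essSupNorm01 f := by
    have hmono' : ∫ x in (0:ℝ)..1, f x * ψ x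
        ≤ ∫ x in (0:ℝ)..1, essSupNorm01 f * ψ x := by
      apply intervalIntegral.integral_mono_ae_restrict (by norm_num) hfψint hEψint
      filter_upwards [hψpos, sidon_ae_le_essSup hmm hfstep] with x h0 hE
      calc f x * ψ x ≤ |f x| * ψ x := mul_le_mul_of_nonneg_right (le_abs_self _) h0
      _ ≤ essSupNorm01 f * ψ x := mul_le_mul_of_nonneg_right hE h0
    rwa [intervalIntegral.integral_const_mul, hψ1, mul_one] at hmono'
  refine ⟨?_, hupper⟩
  rw [← hfψ]
  exact hlow
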